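/- Let $m \ge q \ge 2$ be integers and $\alpha > 1$ be a real number. There exists a constant $C = C(m,q,\alpha)$ such that for every $n \in \mathbb{N}$, $q!\,|T_{m,n}^{q}|\, n^{-q/\alpha} \le \lambda_{\alpha}(T_{m,n}^{q}) \le (1 + C n^{-2})\, q!\,|T_{m,n}^{q}|\, n^{-q/\alpha}$. -/

import Mathlib

open scoped Classical
open Finset Filter Real

/-- An `r`-uniform hypergraph on vertex set `Fin n`. -/
structure RGraph (r n : ℕ) where
  edges : Finset (Finset (Fin n))
  card_eq : ∀ e ∈ edges, e.card = r

/-- The set (as a `Finset`) of injective homomorphisms from `Q` to `H`. -/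
noncomputable def Inj {r a b : ℕ} (Q : RGraph r a) (H : RGraph r b) :
    Finset (Fin a → Fin b) :=
  Finset.univ.filter fun φ => Function.Injective φ ∧ ∀ e ∈ Q.edges, e.image φ ∈ H.edges

/-- The Lagrangian `Q`-polynomial of `H`. -/
noncomputable def lagPoly {r a n : ℕ} (Q : RGraph r a) (H : RGraph r n)
    (x : Fin n → ℝ) : ℝ :=
  ∑ φ ∈ Inj Q H, ∏ i ∈ Finset.univ.image φ, x i

/-- The domain `Δ_α^{n-1} = {x : |x_1|^α + ⋯ + |x_n|^α = 1}`. -/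
def simplex (α : ℝ) (n : ℕ) : Set (Fin n → ℝ) :=
  {x | ∑ i, |x i| ^ α = 1}

/-- The `(α,Q)`-spectral radius of `H`. -/
noncomputable def specRad (α : ℝ) {r a n : ℕ} (Q : RGraph r a) (H : RGraph r n) : ℝ :=
  sSup (lagPoly Q H '' simplex α n)

/-- The set of optimal vectors. -/
noncomputable def OPT (α : ℝ) {r a n : ℕ} (Q : RGraph r a) (H : RGraph r n) :
    Set (Fin n → ℝ) :=
  {x ∈ simplex α n | lagPoly Q H x = specRad α Q H}
/-- The balanced complete `m`-partite `q`-graph on `n` vertices: parts are the residue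
classes mod `m`, edges are the `q`-subsets meeting each part in at most one vertex. -/
def TuranHG (m q n : ℕ) : RGraph q n where
  edges := (Finset.powersetCard q Finset.univ).filter
    (fun e => ∀ v ∈ e, ∀ w ∈ e, v.val % m = w.val % m → v = w)
  card_eq := fun e he => (Finset.mem_powersetCard.mp (Finset.mem_filter.mp he).1).2

/-- The classical Lagrangian polynomial `P_H(x) = q! ∑_{e ∈ H} ∏_{i ∈ e} x_i`. -/
noncomputable def lagPolyEdge {q n : ℕ} (H : RGraph q n) (x : Fin n → ℝ) : ℝ :=
  (q.factorial : ℝ) * ∑ e ∈ H.edges, ∏ i ∈ e, x i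

/-- The `α`-spectral radius `λ_α(H)` of a `q`-graph `H`. -/
noncomputable def specRadEdge (α : ℝ) {q n : ℕ} (H : RGraph q n) : ℝ :=
  sSup (lagPolyEdge H '' simplex α n)

section Helpers

variable {β : Type*} [Fintype β] [DecidableEq β]

/-- Reindexing: summing over (J, j∈J) with |J|=k+1 equals summing over (M, j∉M) with |M|=k. -/
lemma sum_pc_succ (k : ℕ) (F : Finset β → β → ℝ) :
    ∑ J ∈ powersetCard (k+1) (univ : Finset β), ∑ j ∈ J, F J j
      = ∑ M ∈ powersetCard k (univ : Finset β), ∑ j ∈ univ \ M, F (insert j M) j := by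
  rw [Finset.sum_sigma', Finset.sum_sigma']
  apply Finset.sum_nbij' (i := fun p => ⟨p.1.erase p.2, p.2⟩)
    (j := fun p => ⟨insert p.2 p.1, p.2⟩)
  · rintro ⟨J, j⟩ hp
    simp only [mem_sigma, mem_powersetCard_univ] at hp ⊢
    exact ⟨by rw [card_erase_of_mem hp.2, hp.1]; rfl,
      by simp [notMem_erase]⟩
  · rintro ⟨M, j⟩ hp
    simp only [mem_sigma, mem_powersetCard_univ, Finset.mem_sdiff, mem_univ, true_and] at hp ⊢
    exact ⟨by rw [card_insert_of_notMem hp.2, hp.1], mem_insert_self _ _⟩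
  · rintro ⟨J, j⟩ hp
    simp only [mem_sigma, mem_powersetCard_univ] at hp
    simp [insert_erase hp.2]
  · rintro ⟨M, j⟩ hp
    simp only [mem_sigma, mem_powersetCard_univ, Finset.mem_sdiff, mem_univ, true_and] at hp
    simp [erase_insert hp.2]
  · rintro ⟨J, j⟩ hp
    simp only [mem_sigma, mem_powersetCard_univ] at hp
    simp [insert_erase hp.2]

/-- If `∑ g = 0` then the double sum over `(J, j ∈ J)` vanishes. -/
lemma sum_pc_mem_zero (g : β → ℝ) (hg : ∑ j, g j = 0) : ∀ k : ℕ,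
    ∑ J ∈ powersetCard k (univ : Finset β), ∑ j ∈ J, g j = 0
  | 0 => by simp
  | (k+1) => by
    rw [sum_pc_succ k (fun _ j => g j)]
    have h2 : ∀ M ∈ powersetCard k (univ : Finset β), ∑ j ∈ univ \ M, g j
        = - ∑ j ∈ M, g j := by
      intro M hM
      have := Finset.sum_sdiff (f := g) (subset_univ M)
      linarith
    rw [Finset.sum_congr rfl h2, Finset.sum_neg_distrib, sum_pc_mem_zero g hg k, neg_zero]

variable {β : Type*} [Fintype β] [DecidableEq β]

lemma step_identity (s : β → ℝ) (k : ℕ) :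
    ((k:ℝ)+1) * ∑ J ∈ powersetCard (k+1) (univ : Finset β), ∏ j ∈ J, s j
      = ∑ M ∈ powersetCard k (univ : Finset β), (∏ j ∈ M, s j) * ∑ j ∈ univ \ M, s j := by
  have h := sum_pc_succ k (fun J j => (∏ i ∈ J.erase j, s i) * s j)
  have hL : ∑ J ∈ powersetCard (k+1) (univ : Finset β),
      ∑ j ∈ J, (∏ i ∈ J.erase j, s i) * s j
      = ((k:ℝ)+1) * ∑ J ∈ powersetCard (k+1) (univ : Finset β), ∏ j ∈ J, s j := by
    rw [Finset.mul_sum]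
    apply Finset.sum_congr rfl
    intro J hJ
    rw [mem_powersetCard_univ] at hJ
    have : ∀ j ∈ J, (∏ i ∈ J.erase j, s i) * s j = ∏ i ∈ J, s i := by
      intro j hj; exact Finset.prod_erase_mul J s hj
    rw [Finset.sum_congr rfl this, Finset.sum_const, hJ]
    push_cast; ring
  have hR : ∀ M ∈ powersetCard k (univ : Finset β),
      ∑ j ∈ univ \ M, (∏ i ∈ (insert j M).erase j, s i) * s j
      = (∏ j ∈ M, s j) * ∑ j ∈ univ \ M, s j := by
    intro M hM
    rw [Finset.mul_sum]
    apply Finset.sum_congr rfl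
    intro j hj
    rw [Finset.mem_sdiff] at hj
    rw [erase_insert hj.2]
  rw [hL] at h
  rw [h]
  exact Finset.sum_congr rfl hR

variable {β : Type*} [Fintype β] [DecidableEq β]

lemma chebyshev_aux (s : β → ℝ) (T : Finset β) :
    0 ≤ ∑ j ∈ T, ∑ k ∈ T.erase j, s j * (s j - s k) := by
  have hdiag : ∀ j ∈ T, ∑ k ∈ T.erase j, s j * (s j - s k)
      = ∑ k ∈ T, s j * (s j - s k) := by
    intro j hj
    exact Finset.sum_erase T (by simp)
  rw [Finset.sum_congr rfl hdiag]
  have hexp : ∑ j ∈ T, ∑ k ∈ T, s j * (s j - s k)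
      = (#T : ℝ) * ∑ j ∈ T, s j ^ 2 - (∑ j ∈ T, s j) ^ 2 := by
    have h1 : ∀ j ∈ T, ∑ k ∈ T, s j * (s j - s k)
        = (#T : ℝ) * s j ^ 2 - s j * ∑ k ∈ T, s k := by
      intro j hj
      simp_rw [mul_sub]
      rw [Finset.sum_sub_distrib, Finset.sum_const, nsmul_eq_mul, ← Finset.mul_sum]
      ring
    rw [Finset.sum_congr rfl h1, Finset.sum_sub_distrib, ← Finset.mul_sum, ← Finset.sum_mul]
    ring
  rw [hexp]
  have := sq_sum_le_card_mul_sum_sq (s := T) (f := s)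
  push_cast at this ⊢
  linarith

lemma key_pos (s : β → ℝ) (hs : ∀ j, 0 ≤ s j) (k : ℕ) :
    (k:ℝ) * (∑ j, s j) * (∑ J ∈ powersetCard k (univ : Finset β), ∏ j ∈ J, s j)
      ≤ (Fintype.card β : ℝ) *
        ∑ J ∈ powersetCard k (univ : Finset β), (∏ j ∈ J, s j) * ∑ j ∈ J, s j := by
  set m := Fintype.card β with hm
  cases k with
  | zero => simp
  | succ t =>
    have h := sum_pc_succ t (fun J j => (∏ i ∈ J.erase j, s i) * s j *
      (∑ k' ∈ univ \ J, (s j - s k')))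
    have hL : ∑ J ∈ powersetCard (t+1) (univ : Finset β),
        ∑ j ∈ J, (∏ i ∈ J.erase j, s i) * s j * (∑ k' ∈ univ \ J, (s j - s k'))
        = (m : ℝ) * (∑ J ∈ powersetCard (t+1) (univ : Finset β), (∏ j ∈ J, s j) * ∑ j ∈ J, s j)
          - ((t:ℝ)+1) * (∑ j, s j) *
            (∑ J ∈ powersetCard (t+1) (univ : Finset β), ∏ j ∈ J, s j) := by
      rw [Finset.mul_sum, Finset.mul_sum, ← Finset.sum_sub_distrib]
      apply Finset.sum_congr rfl
      intro J hJ
      rw [mem_powersetCard_univ] at hJ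
      have hcard : (#(univ \ J) : ℝ) + ((t:ℝ)+1) = m := by
        have h2 := Finset.card_sdiff_add_card_eq_card (subset_univ J)
        rw [hJ, card_univ, ← hm] at h2
        exact_mod_cast congrArg (Nat.cast : ℕ → ℝ) h2
      have hsd : ∑ k' ∈ univ \ J, s k' = (∑ j, s j) - ∑ j ∈ J, s j := by
        have := Finset.sum_sdiff (f := s) (subset_univ J)
        linarith
      have hinner : ∀ j ∈ J, (∏ i ∈ J.erase j, s i) * s j * (∑ k' ∈ univ \ J, (s j - s k'))
          = (∏ i ∈ J, s i) * ((#(univ \ J) : ℝ) * s j - ((∑ j, s j) - ∑ i ∈ J, s i)) := by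
        intro j hj
        rw [Finset.prod_erase_mul J s hj, Finset.sum_sub_distrib, Finset.sum_const,
          nsmul_eq_mul, hsd]
      rw [Finset.sum_congr rfl hinner, ← Finset.mul_sum, Finset.sum_sub_distrib,
        ← Finset.mul_sum, Finset.sum_const, hJ, nsmul_eq_mul]
      push_cast
      linear_combination (∏ i ∈ J, s i) * (∑ i ∈ J, s i) * hcard
    have hR : 0 ≤ ∑ M ∈ powersetCard t (univ : Finset β), ∑ j ∈ univ \ M,
        (∏ i ∈ (insert j M).erase j, s i) * s j * (∑ k' ∈ univ \ insert j M, (s j - s k')) := by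
      apply Finset.sum_nonneg
      intro M hM
      have hstep : ∀ j ∈ univ \ M,
          (∏ i ∈ (insert j M).erase j, s i) * s j * (∑ k' ∈ univ \ insert j M, (s j - s k'))
          = (∏ i ∈ M, s i) * ∑ k' ∈ (univ \ M).erase j, s j * (s j - s k') := by
        intro j hj
        rw [Finset.mem_sdiff] at hj
        rw [erase_insert hj.2, Finset.sdiff_insert]
        simp only [Finset.mul_sum, mul_assoc]
      rw [Finset.sum_congr rfl hstep, ← Finset.mul_sum]
      exact mul_nonneg (Finset.prod_nonneg fun i _ => hs i) (chebyshev_aux s (univ \ M))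
    rw [hL] at h
    rw [← h] at hR
    push_cast at hR ⊢
    linarith

variable {β : Type*} [Fintype β] [DecidableEq β]

lemma maclaurin (s : β → ℝ) (hs : ∀ j, 0 ≤ s j) : ∀ k : ℕ,
    (Fintype.card β : ℝ)^k * ∑ J ∈ powersetCard k (univ : Finset β), ∏ j ∈ J, s j
      ≤ ((Fintype.card β).choose k : ℝ) * (∑ j, s j)^k
  | 0 => by simp
  | (k+1) => by
    set m := Fintype.card β with hm
    by_cases hkm : m ≤ k
    · have he : (powersetCard (k+1) (univ : Finset β)) = ∅ := by
        apply powersetCard_eq_empty.mpr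
        rw [card_univ, ← hm]; omega
      have hc : m.choose (k+1) = 0 := Nat.choose_eq_zero_of_lt (by omega)
      rw [he, hc]
      simp
    · push_neg at hkm
      have hS : (0:ℝ) ≤ ∑ j, s j := Finset.sum_nonneg fun j _ => hs j
      have hE : (0:ℝ) ≤ ∑ J ∈ powersetCard k (univ : Finset β), ∏ j ∈ J, s j :=
        Finset.sum_nonneg fun J _ => Finset.prod_nonneg fun j _ => hs j
      -- step: m * (k+1) * E_{k+1} ≤ (m - k) * S * E_k
      have hstep : (m:ℝ) * (((k:ℝ)+1) * ∑ J ∈ powersetCard (k+1) (univ : Finset β), ∏ j ∈ J, s j)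
          ≤ ((m:ℝ) - k) * (∑ j, s j) * ∑ J ∈ powersetCard k (univ : Finset β), ∏ j ∈ J, s j := by
        rw [step_identity s k]
        have hsd : ∀ M ∈ powersetCard k (univ : Finset β),
            (∏ j ∈ M, s j) * ∑ j ∈ univ \ M, s j
            = (∏ j ∈ M, s j) * (∑ j, s j) - (∏ j ∈ M, s j) * ∑ j ∈ M, s j := by
          intro M hM
          have h3 := Finset.sum_sdiff (f := s) (subset_univ M)
          linear_combination (∏ j ∈ M, s j) * h3
        rw [Finset.sum_congr rfl hsd, Finset.sum_sub_distrib, ← Finset.sum_mul]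
        have h2 := key_pos s hs k
        rw [← hm] at h2
        ring_nf
        ring_nf at h2
        nlinarith [h2]
      have ih := maclaurin s hs k
      have hchoose : ((m.choose (k+1) : ℝ)) * ((k:ℝ)+1) = (m.choose k : ℝ) * ((m:ℝ) - k) := by
        have := Nat.choose_succ_right_eq m k
        have hcast : ((m - k : ℕ) : ℝ) = (m:ℝ) - k := by
          rw [Nat.cast_sub (le_of_lt hkm)]
        calc ((m.choose (k+1) : ℝ)) * ((k:ℝ)+1)
            = ((m.choose (k+1) * (k+1) : ℕ) : ℝ) := by push_cast; ring
          _ = ((m.choose k * (m - k) : ℕ) : ℝ) := by rw [this]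
          _ = (m.choose k : ℝ) * ((m:ℝ) - k) := by push_cast [hcast]; ring
      -- combine
      have hmk : (0:ℝ) ≤ (m:ℝ) - k := by
        have : (k:ℝ) ≤ m := by exact_mod_cast le_of_lt hkm
        linarith
      have hK1 : (0:ℝ) < (k:ℝ)+1 := by positivity
      rw [← mul_le_mul_iff_right₀ hK1]
      calc ((k:ℝ)+1) * ((m:ℝ)^(k+1) * ∑ J ∈ powersetCard (k+1) (univ : Finset β), ∏ j ∈ J, s j)
          = (m:ℝ)^k * ((m:ℝ) * (((k:ℝ)+1) * ∑ J ∈ powersetCard (k+1) (univ : Finset β), ∏ j ∈ J, s j)) := by ring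
        _ ≤ (m:ℝ)^k * (((m:ℝ) - k) * (∑ j, s j) * ∑ J ∈ powersetCard k (univ : Finset β), ∏ j ∈ J, s j) := by
            apply mul_le_mul_of_nonneg_left hstep (by positivity)
        _ = (((m:ℝ) - k) * (∑ j, s j)) * ((m:ℝ)^k * ∑ J ∈ powersetCard k (univ : Finset β), ∏ j ∈ J, s j) := by ring
        _ ≤ (((m:ℝ) - k) * (∑ j, s j)) * ((m.choose k : ℝ) * (∑ j, s j)^k) := by
            apply mul_le_mul_of_nonneg_left ih (mul_nonneg hmk hS)
        _ = ((m.choose (k+1) : ℝ) * ((k:ℝ)+1)) * (∑ j, s j)^k * (∑ j, s j) := by rw [hchoose]; ring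
        _ = ((k:ℝ)+1) * ((m.choose (k+1) : ℝ) * (∑ j, s j)^(k+1)) := by ring

variable {β : Type*} [Fintype β] [DecidableEq β]

lemma esym_deficit (c : β → ℝ) (a : ℝ) (ha : 1 ≤ a) (hc : ∀ j, |c j - a| ≤ 1)
    (hsum : ∑ j, (c j - a) = 0) {k : ℕ} (hk : 2 ≤ k) :
    ((Fintype.card β).choose k : ℝ) * a^k
      ≤ (∑ J ∈ powersetCard k (univ : Finset β), ∏ j ∈ J, c j)
        + ((Fintype.card β).choose k : ℝ) * 2^k * a^(k-2) := by
  set m := Fintype.card β with hm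
  have ha0 : (0:ℝ) ≤ a := le_trans zero_le_one ha
  have hexp : ∀ J ∈ powersetCard k (univ : Finset β),
      ∏ j ∈ J, c j = a^k + (∑ j ∈ J, (c j - a)) * a^(k-1) +
        ∑ K ∈ J.powerset.filter (fun K => ¬ K.card ≤ 1),
          (∏ j ∈ K, (c j - a)) * a^(k - K.card) := by
    intro J hJ
    rw [mem_powersetCard_univ] at hJ
    have h1 : ∏ j ∈ J, c j = ∏ j ∈ J, ((c j - a) + a) := by
      apply Finset.prod_congr rfl; intro j _; ring
    rw [h1, Finset.prod_add]
    have h2 : ∀ K ∈ J.powerset, (∏ j ∈ K, (c j - a)) * (∏ _j ∈ J \ K, a)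
        = (∏ j ∈ K, (c j - a)) * a^(k - K.card) := by
      intro K hK
      rw [mem_powerset] at hK
      rw [Finset.prod_const, card_sdiff_of_subset hK, hJ]
    rw [Finset.sum_congr rfl h2,
      ← Finset.sum_filter_add_sum_filter_not J.powerset (fun K => K.card ≤ 1)]
    congr 1
    have h3 : J.powerset.filter (fun K => K.card ≤ 1) = insert ∅ (J.image fun j => {j}) := by
      ext K
      simp only [mem_filter, mem_powerset, mem_insert, mem_image]
      constructor
      · rintro ⟨hKJ, hcard⟩
        rcases Nat.le_one_iff_eq_zero_or_eq_one.mp hcard with h0 | h1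
        · exact Or.inl (Finset.card_eq_zero.mp h0)
        · obtain ⟨x, rfl⟩ := Finset.card_eq_one.mp h1
          exact Or.inr ⟨x, hKJ (mem_singleton_self x), rfl⟩
      · rintro (rfl | ⟨j, hj, rfl⟩)
        · simp
        · exact ⟨Finset.singleton_subset_iff.mpr hj, by simp⟩
    rw [h3, Finset.sum_insert (by simp), Finset.sum_image
      (fun x _ y _ h => Finset.singleton_injective h)]
    rw [Finset.sum_mul]
    simp
  rw [Finset.sum_congr rfl hexp, Finset.sum_add_distrib, Finset.sum_add_distrib,
    Finset.sum_const, Finset.card_powersetCard, card_univ, ← hm, nsmul_eq_mul,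
    ← Finset.sum_mul, sum_pc_mem_zero (fun j => c j - a) hsum k, zero_mul]
  have hrem : |∑ J ∈ powersetCard k (univ : Finset β),
      ∑ K ∈ J.powerset.filter (fun K => ¬ K.card ≤ 1),
        (∏ j ∈ K, (c j - a)) * a^(k - K.card)|
      ≤ (m.choose k : ℝ) * 2^k * a^(k-2) := by
    calc |∑ J ∈ powersetCard k (univ : Finset β),
        ∑ K ∈ J.powerset.filter (fun K => ¬ K.card ≤ 1),
          (∏ j ∈ K, (c j - a)) * a^(k - K.card)|
        ≤ ∑ J ∈ powersetCard k (univ : Finset β),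
          |∑ K ∈ J.powerset.filter (fun K => ¬ K.card ≤ 1),
            (∏ j ∈ K, (c j - a)) * a^(k - K.card)| := Finset.abs_sum_le_sum_abs _ _
      _ ≤ ∑ _J ∈ powersetCard k (univ : Finset β), (2:ℝ)^k * a^(k-2) := by
          apply Finset.sum_le_sum
          intro J hJ
          rw [mem_powersetCard_univ] at hJ
          calc |∑ K ∈ J.powerset.filter (fun K => ¬ K.card ≤ 1),
              (∏ j ∈ K, (c j - a)) * a^(k - K.card)|
              ≤ ∑ K ∈ J.powerset.filter (fun K => ¬ K.card ≤ 1),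
                |(∏ j ∈ K, (c j - a)) * a^(k - K.card)| := Finset.abs_sum_le_sum_abs _ _
            _ ≤ ∑ _K ∈ J.powerset.filter (fun K => ¬ K.card ≤ 1), a^(k-2) := by
                apply Finset.sum_le_sum
                intro K hK
                rw [mem_filter, mem_powerset] at hK
                have h2K : 2 ≤ K.card := by omega
                rw [abs_mul, abs_prod, abs_pow, abs_of_nonneg ha0]
                have hp1 : ∏ j ∈ K, |c j - a| ≤ 1 :=
                  Finset.prod_le_one (fun j _ => abs_nonneg _) (fun j _ => hc j)
                have hp2 : a^(k - K.card) ≤ a^(k-2) :=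
                  pow_le_pow_right₀ ha (Nat.sub_le_sub_left h2K k)
                calc (∏ j ∈ K, |c j - a|) * a^(k - K.card) ≤ 1 * a^(k-2) := by
                      apply mul_le_mul hp1 hp2 (by positivity)
                      exact zero_le_one
                  _ = a^(k-2) := one_mul _
            _ ≤ (2:ℝ)^k * a^(k-2) := by
                have hcard : (J.powerset.filter (fun K => ¬ K.card ≤ 1)).card ≤ 2^k := by
                  calc (J.powerset.filter (fun K => ¬ K.card ≤ 1)).card
                      ≤ J.powerset.card := Finset.card_filter_le _ _
                    _ = 2^k := by rw [Finset.card_powerset, hJ]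
                rw [Finset.sum_const, nsmul_eq_mul]
                apply mul_le_mul_of_nonneg_right _ (by positivity)
                exact_mod_cast hcard
      _ = (m.choose k : ℝ) * 2^k * a^(k-2) := by
          rw [Finset.sum_const, Finset.card_powersetCard, card_univ, ← hm, nsmul_eq_mul]
          ring
  have := abs_le.mp hrem
  linarith [this.1]

lemma pi_heq {γ : Type*} {n : ℕ} [DecidableEq γ] {X J : Finset γ} (h : X = J)
    (f : ∀ j ∈ X, Fin n) (g : ∀ j ∈ J, Fin n)
    (hfg : ∀ j (hj : j ∈ J), f j (h ▸ hj) = g j hj) : HEq f g := by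
  subst h
  rw [heq_iff_eq]
  funext j hj
  exact hfg j hj

lemma rainbow_expand {n m q : ℕ} (r : Fin n → Fin m) (y : Fin n → ℝ) :
    ∑ e ∈ (powersetCard q (univ : Finset (Fin n))).filter
        (fun e => ∀ v ∈ e, ∀ w ∈ e, r v = r w → v = w), ∏ i ∈ e, y i
      = ∑ J ∈ powersetCard q (univ : Finset (Fin m)),
          ∏ j ∈ J, ∑ i ∈ univ.filter (fun i => r i = j), y i := by
  classical
  have hps : ∀ J ∈ powersetCard q (univ : Finset (Fin m)),
      ∏ j ∈ J, ∑ i ∈ univ.filter (fun i => r i = j), y i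
      = ∑ g ∈ J.pi (fun j => univ.filter (fun i => r i = j)),
          ∏ j ∈ J.attach, y (g j.1 j.2) := fun J _ => Finset.prod_sum _ _ _
  rw [Finset.sum_congr rfl hps, Finset.sum_sigma']
  -- uniqueness of representative in each class
  have huniq : ∀ e ∈ (powersetCard q (univ : Finset (Fin n))).filter
      (fun e => ∀ v ∈ e, ∀ w ∈ e, r v = r w → v = w),
      ∀ j ∈ e.image r, ∃! i, i ∈ e ∧ r i = j := by
    intro e he j hj
    rw [mem_filter] at he
    obtain ⟨i0, hi0, hri0⟩ := mem_image.mp hj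
    exact ⟨i0, ⟨hi0, hri0⟩, fun i' hi' => he.2 i' hi'.1 i0 hi0 (by rw [hi'.2, hri0])⟩
  symm
  apply Finset.sum_bij'
    (i := fun (p : Σ J : Finset (Fin m), ∀ j ∈ J, Fin n) _ =>
      p.1.attach.image (fun jh => p.2 jh.1 jh.2))
    (j := fun e he => ⟨e.image r, fun j hj =>
      Finset.choose (fun i => r i = j) e (huniq e he j hj)⟩)
  case hi =>
    rintro ⟨J, p2⟩ hp
    rw [mem_sigma, mem_powersetCard_univ] at hp
    have hmem : ∀ jh : {x // x ∈ J}, r (p2 jh.1 jh.2) = jh.1 := by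
      intro jh
      have := Finset.mem_pi.mp hp.2 jh.1 jh.2
      exact (mem_filter.mp this).2
    have hinj : Function.Injective (fun jh : {x // x ∈ J} => p2 jh.1 jh.2) := by
      intro a b hab
      have h2 : r (p2 a.1 a.2) = r (p2 b.1 b.2) := congrArg r hab
      rw [hmem a, hmem b] at h2
      exact Subtype.ext h2
    rw [mem_filter, mem_powersetCard_univ]
    refine ⟨?_, ?_⟩
    · rw [Finset.card_image_of_injective _ hinj, Finset.card_attach, hp.1]
    · intro v hv w hw hrvw
      obtain ⟨a, _, rfl⟩ := mem_image.mp hv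
      obtain ⟨b, _, rfl⟩ := mem_image.mp hw
      have : a = b := by
        apply Subtype.ext
        rw [← hmem a, ← hmem b, hrvw]
      rw [this]
  case hj =>
    intro e he
    have he' := mem_filter.mp he
    have hinj : Set.InjOn r e := fun v hv w hw h => he'.2 v hv w hw h
    rw [mem_sigma, mem_powersetCard_univ]
    constructor
    · rw [Finset.card_image_of_injOn hinj,
        (mem_powersetCard.mp he'.1).2]
    · rw [Finset.mem_pi]
      intro j hj
      rw [mem_filter]
      exact ⟨mem_univ _, Finset.choose_property (fun i => r i = j) e (huniq e he j hj)⟩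
  case left_neg =>
    rintro ⟨J, p2⟩ hp
    rw [mem_sigma, mem_powersetCard_univ] at hp
    have hmem : ∀ jh : {x // x ∈ J}, r (p2 jh.1 jh.2) = jh.1 := by
      intro jh
      have := Finset.mem_pi.mp hp.2 jh.1 jh.2
      exact (mem_filter.mp this).2
    have h1 : (J.attach.image (fun jh => p2 jh.1 jh.2)).image r = J := by
      rw [Finset.image_image]
      have : J.attach.image (r ∘ fun jh => p2 jh.1 jh.2) = J.attach.image Subtype.val := by
        apply Finset.image_congr
        intro jh _
        exact hmem jh
      rw [this, Finset.attach_image_val]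
    apply Sigma.ext h1
    apply pi_heq h1
    intro j hj
    have hchoose : ∀ (hu : ∃! i, i ∈ J.attach.image (fun jh => p2 jh.1 jh.2) ∧ r i = j),
        Finset.choose (fun i => r i = j) (J.attach.image (fun jh => p2 jh.1 jh.2)) hu
          = p2 j hj := by
      intro hu
      exact hu.unique ⟨Finset.choose_mem (fun i => r i = j) _ hu,
          Finset.choose_property (fun i => r i = j) _ hu⟩
        ⟨mem_image_of_mem _ (mem_attach J ⟨j, hj⟩), hmem ⟨j, hj⟩⟩
    exact hchoose _
  case right_neg =>
    intro e he
    have he' := mem_filter.mp he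
    ext i
    simp only [Finset.mem_image, Finset.mem_attach, true_and, Subtype.exists]
    constructor
    · rintro ⟨j, hj, rfl⟩
      exact Finset.choose_mem _ _ _
    · intro hi
      refine ⟨r i, ⟨i, hi, rfl⟩, ?_⟩
      have hu := huniq e he (r i) (mem_image_of_mem r hi)
      exact hu.unique ⟨Finset.choose_mem (fun x => r x = r i) _ _,
        Finset.choose_property (fun x => r x = r i) _ _⟩ ⟨hi, rfl⟩
  case h =>
    rintro ⟨J, p2⟩ hp
    rw [mem_sigma, mem_powersetCard_univ] at hp
    have hmem : ∀ jh : {x // x ∈ J}, r (p2 jh.1 jh.2) = jh.1 := by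
      intro jh
      have := Finset.mem_pi.mp hp.2 jh.1 jh.2
      exact (mem_filter.mp this).2
    have hinj : ∀ x ∈ J.attach, ∀ z ∈ J.attach,
        p2 x.1 x.2 = p2 z.1 z.2 → x = z := by
      intro a _ b _ hab
      have h2 : r (p2 a.1 a.2) = r (p2 b.1 b.2) := congrArg r hab
      rw [hmem a, hmem b] at h2
      exact Subtype.ext h2
    show (∏ jh ∈ J.attach, y (p2 jh.1 jh.2))
        = ∏ i ∈ J.attach.image (fun jh => p2 jh.1 jh.2), y i
    exact (Finset.prod_image hinj).symm

lemma filter_univ_fin_card {n : ℕ} (P : ℕ → Prop) [DecidablePred P] :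
    #(univ.filter (fun i : Fin n => P (i : ℕ))) = #((range n).filter P) := by
  rw [Finset.card_filter, Finset.card_filter]
  exact Fin.sum_univ_eq_sum_range (fun k => if P k then 1 else 0) n

lemma part_card_bounds {n m : ℕ} (hm : 0 < m) (j : ℕ) (hj : j < m) :
    n / m ≤ #((range n).filter (fun i => i % m = j))
      ∧ #((range n).filter (fun i => i % m = j)) ≤ n / m + 1 := by
  constructor
  · have := Finset.card_le_card_of_injOn (f := fun k => j + k * m)
      (s := range (n / m)) (t := (range n).filter (fun i => i % m = j)) ?_ ?_
    · simpa using this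
    · intro k hk
      rw [Finset.mem_coe, mem_range] at hk
      rw [Finset.mem_coe, mem_filter, mem_range]
      constructor
      · have h1 : (k + 1) * m ≤ (n / m) * m := Nat.mul_le_mul_right m hk
        have h2 : (n / m) * m ≤ n := Nat.div_mul_le_self n m
        calc j + k * m < m + k * m := by omega
          _ = (k + 1) * m := by ring
          _ ≤ n := le_trans h1 h2
      · rw [Nat.add_mul_mod_self_right, Nat.mod_eq_of_lt hj]
    · intro a _ b _ hab
      simp only at hab
      have : a * m = b * m := by omega
      exact Nat.eq_of_mul_eq_mul_right hm this
  · have := Finset.card_le_card_of_injOn (f := fun i => i / m)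
      (s := (range n).filter (fun i => i % m = j)) (t := range (n / m + 1)) ?_ ?_
    · simpa using this
    · intro i hi
      rw [Finset.mem_coe, mem_filter, mem_range] at hi
      rw [Finset.mem_coe, mem_range]
      have : i / m ≤ n / m := Nat.div_le_div_right (le_of_lt hi.1)
      show i / m < n / m + 1
      omega
    · intro a ha b hb hab
      simp only [Finset.mem_coe, mem_filter, mem_range] at ha hb
      obtain ⟨ha1, ha2'⟩ := ha
      obtain ⟨hb1, hb2'⟩ := hb
      have hab' : a / m = b / m := hab
      rw [← Nat.div_add_mod a m, ← Nat.div_add_mod b m, hab', ha2', hb2']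

lemma part_real_bounds {n m : ℕ} (hm : 0 < m) (c : ℕ) (hc1 : n / m ≤ c) (hc2 : c ≤ n / m + 1) :
    |(c : ℝ) - (n : ℝ) / m| ≤ 1 := by
  have hm0 : (0:ℝ) < m := by exact_mod_cast hm
  have hdm : ((n / m : ℕ) : ℝ) ≤ (n : ℝ) / m := Nat.cast_div_le
  have hdm2 : (n : ℝ) / m < ((n / m : ℕ) : ℝ) + 1 := by
    rw [div_lt_iff₀ hm0]
    have h1 := Nat.div_add_mod n m
    have h2 : n % m < m := Nat.mod_lt n hm
    have : (n : ℝ) < (m : ℝ) * ((n / m : ℕ) : ℝ) + m := by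
      have : n < m * (n / m) + m := by omega
      exact_mod_cast this
    linarith
  have hc1' : ((n / m : ℕ) : ℝ) ≤ (c : ℝ) := by exact_mod_cast hc1
  have hc2' : (c : ℝ) ≤ ((n / m : ℕ) : ℝ) + 1 := by exact_mod_cast hc2
  rw [abs_le]
  constructor <;> linarith
end Helpers

set_option maxHeartbeats 2000000 in
/-- **Lemma: estimate for the `α`-spectral radius of the balanced complete
`m`-partite `q`-graph.** -/
theorem specRad_TuranHG_estimate {m q : ℕ} (hq : 2 ≤ q) (hm : q ≤ m)
    {α : ℝ} (hα : 1 < α) :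
    ∃ C : ℝ, ∀ n : ℕ,
      (q.factorial : ℝ) * ((TuranHG m q n).edges.card : ℝ) * (n : ℝ) ^ (-(q : ℝ) / α)
          ≤ specRadEdge α (TuranHG m q n) ∧
      specRadEdge α (TuranHG m q n)
          ≤ (1 + C / (n : ℝ) ^ 2) *
            ((q.factorial : ℝ) * ((TuranHG m q n).edges.card : ℝ) *
              (n : ℝ) ^ (-(q : ℝ) / α)) := by
  have hm0 : 0 < m := by omega
  have hα0 : (0:ℝ) < α := by linarith
  refine ⟨(4:ℝ)^q * (m:ℝ)^2 * ((m.choose q : ℝ) + 1), fun n => ?_⟩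
  set C : ℝ := (4:ℝ)^q * (m:ℝ)^2 * ((m.choose q : ℝ) + 1) with hCdef
  -- trivial case n = 0
  by_cases hn0 : n = 0
  · subst hn0
    have hedge0 : (TuranHG m q 0).edges = ∅ := by
      have : (Finset.powersetCard q (Finset.univ : Finset (Fin 0))) = ∅ := by
        apply Finset.powersetCard_eq_empty.mpr
        simp; omega
      show Finset.filter _ _ = ∅
      rw [this, Finset.filter_empty]
    have hsimp0 : simplex α 0 = ∅ := by
      ext x
      simp [simplex]
    have hspec0 : specRadEdge α (TuranHG m q 0) = 0 := by
      rw [specRadEdge, hsimp0]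
      simp [Real.sSup_empty]
    rw [hspec0, hedge0]
    simp
  have hn1 : 1 ≤ n := Nat.one_le_iff_ne_zero.mpr hn0
  have hNpos : (0:ℝ) < n := by exact_mod_cast hn1
  have hN0le : (0:ℝ) ≤ n := le_of_lt hNpos
  have hmR : (0:ℝ) < m := by exact_mod_cast hm0
  -- the residue map
  set r : Fin n → Fin m := fun i => ⟨(i : ℕ) % m, Nat.mod_lt _ hm0⟩ with hrdef
  have hrval : ∀ i : Fin n, (r i : ℕ) = (i : ℕ) % m := fun i => rfl
  have hedges : (TuranHG m q n).edges
      = (Finset.powersetCard q (Finset.univ : Finset (Fin n))).filter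
        (fun e => ∀ v ∈ e, ∀ w ∈ e, r v = r w → v = w) := by
    show Finset.filter _ _ = _
    apply Finset.filter_congr
    intro e _
    constructor
    · intro h v hv w hw hr
      apply h v hv w hw
      have := congrArg Fin.val hr
      rwa [hrval, hrval] at this
    · intro h v hv w hw hr
      apply h v hv w hw
      apply Fin.ext
      rw [hrval, hrval]
      exact hr
  have hexpand : ∀ y : Fin n → ℝ,
      ∑ e ∈ (TuranHG m q n).edges, ∏ i ∈ e, y i
        = ∑ J ∈ Finset.powersetCard q (Finset.univ : Finset (Fin m)),
            ∏ j ∈ J, ∑ i ∈ Finset.univ.filter (fun i => r i = j), y i := by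
    intro y
    rw [hedges]
    exact rainbow_expand r y
  -- part sizes
  set cR : Fin m → ℝ := fun j => (#(Finset.univ.filter (fun i => r i = j)) : ℝ) with hcRdef
  have hcard_fiber : ∀ j : Fin m, #(Finset.univ.filter (fun i => r i = j))
      = #((Finset.range n).filter (fun i => i % m = (j:ℕ))) := by
    intro j
    rw [← filter_univ_fin_card (fun k => k % m = (j:ℕ))]
    congr 1
    apply Finset.filter_congr
    intro i _
    constructor
    · intro h
      have := congrArg Fin.val h
      rwa [hrval] at this
    · intro h
      apply Fin.ext
      rw [hrval]
      exact h
  have hcR_nonneg : ∀ j, 0 ≤ cR j := fun j => Nat.cast_nonneg _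
  have hcR_abs : ∀ j : Fin m, |cR j - (n:ℝ)/m| ≤ 1 := by
    intro j
    have hb := part_card_bounds (n := n) hm0 (j:ℕ) j.2
    rw [hcRdef]
    simp only
    rw [hcard_fiber j]
    exact part_real_bounds hm0 _ hb.1 hb.2
  have hsum_cR : ∑ j, cR j = (n:ℝ) := by
    have h := Finset.card_eq_sum_card_fiberwise
      (f := r) (s := (Finset.univ : Finset (Fin n))) (t := Finset.univ)
      (fun x _ => Finset.mem_univ (r x))
    rw [Finset.card_univ, Fintype.card_fin] at h
    rw [hcRdef]
    dsimp only
    rw [← Nat.cast_sum]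
    congr 1
    convert h.symm
  -- the edge count as elementary symmetric polynomial
  have hcardE : ((TuranHG m q n).edges.card : ℝ)
      = ∑ J ∈ Finset.powersetCard q (Finset.univ : Finset (Fin m)), ∏ j ∈ J, cR j := by
    have h1 := hexpand (fun _ => (1:ℝ))
    simp only [Finset.prod_const, one_pow, Finset.sum_const, nsmul_eq_mul, mul_one] at h1
    rw [← h1]
  set Ecnt : ℝ := ∑ J ∈ Finset.powersetCard q (Finset.univ : Finset (Fin m)), ∏ j ∈ J, cR j
    with hEcntdef
  have hEcnt_nonneg : 0 ≤ Ecnt :=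
    Finset.sum_nonneg fun J _ => Finset.prod_nonneg fun j _ => hcR_nonneg j
  -- uniform vector and membership
  set uval : ℝ := (n:ℝ) ^ (-(1:ℝ)/α) with huvaldef
  have huval_pos : 0 < uval := Real.rpow_pos_of_pos hNpos _
  have hu_mem : (fun _ : Fin n => uval) ∈ simplex α n := by
    show ∑ _i : Fin n, |uval| ^ α = 1
    rw [abs_of_pos huval_pos, huvaldef, ← Real.rpow_mul hN0le]
    have hexp : (-(1:ℝ)/α) * α = -1 := by
      field_simp
    rw [hexp, Finset.sum_const, Finset.card_univ, Fintype.card_fin, nsmul_eq_mul,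
      Real.rpow_neg_one]
    field_simp
  have huval_q : uval ^ q = (n:ℝ) ^ (-(q:ℝ)/α) := by
    rw [huvaldef, ← Real.rpow_natCast ((n:ℝ) ^ (-(1:ℝ)/α)) q, ← Real.rpow_mul hN0le]
    congr 1
    ring
  have hval_u : lagPolyEdge (TuranHG m q n) (fun _ => uval)
      = (q.factorial : ℝ) * ((TuranHG m q n).edges.card : ℝ) * (n:ℝ) ^ (-(q:ℝ)/α) := by
    rw [lagPolyEdge]
    have h2 : ∀ e ∈ (TuranHG m q n).edges, (∏ _i ∈ e, uval) = (n:ℝ) ^ (-(q:ℝ)/α) := by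
      intro e he
      rw [Finset.prod_const, (TuranHG m q n).card_eq e he, huval_q]
    rw [Finset.sum_congr rfl h2, Finset.sum_const, nsmul_eq_mul]
    ring
  -- upper bound on the Lagrangian polynomial over the simplex
  set NN : ℝ := (n:ℝ) ^ ((1:ℝ) - 1/α) with hNNdef
  have hNN_nonneg : 0 ≤ NN := le_of_lt (Real.rpow_pos_of_pos hNpos _)
  set B : ℝ := (q.factorial : ℝ) * ((m.choose q : ℝ) * NN ^ q / (m:ℝ)^q) with hBdef
  have hx_bound : ∀ x ∈ simplex α n, lagPolyEdge (TuranHG m q n) x ≤ B := by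
    intro x hx
    have hxs : ∑ i, |x i| ^ α = 1 := hx
    -- power mean: ∑ |x i| ≤ NN
    have hS1 : ∑ i, |x i| ≤ NN := by
      have hw : ∀ i ∈ (Finset.univ : Finset (Fin n)), (0:ℝ) ≤ 1/(n:ℝ) := by
        intro i _; positivity
      have hw' : ∑ _i : Fin n, (1:ℝ)/(n:ℝ) = 1 := by
        rw [Finset.sum_const, Finset.card_univ, Fintype.card_fin, nsmul_eq_mul]
        field_simp
      have hz : ∀ i ∈ (Finset.univ : Finset (Fin n)), (0:ℝ) ≤ |x i| := by
        intro i _; exact abs_nonneg _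
      have hJ := Real.rpow_arith_mean_le_arith_mean_rpow Finset.univ
        (fun _ => 1/(n:ℝ)) (fun i => |x i|) hw hw' hz (le_of_lt hα)
      rw [← Finset.mul_sum, ← Finset.mul_sum, hxs, mul_one] at hJ
      -- hJ : (1/n * ∑|x|)^α ≤ 1/n
      have hu0 : (0:ℝ) ≤ 1/(n:ℝ) * ∑ i, |x i| := by positivity
      have h3 := Real.rpow_le_rpow (Real.rpow_nonneg hu0 α) hJ
        (le_of_lt (by positivity : (0:ℝ) < 1/α))
      rw [← Real.rpow_mul hu0, mul_one_div_cancel (ne_of_gt hα0), Real.rpow_one] at h3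
      -- h3 : 1/n * ∑|x| ≤ (1/n)^(1/α)
      have h4 : ((1:ℝ)/(n:ℝ)) ^ ((1:ℝ)/α) = (n:ℝ) ^ (-(1:ℝ)/α) := by
        rw [one_div, ← Real.rpow_neg_one, ← Real.rpow_mul hN0le]
        congr 1
        ring
      rw [h4] at h3
      have h5 : ∑ i, |x i| ≤ (n:ℝ) * (n:ℝ) ^ (-(1:ℝ)/α) := by
        have := mul_le_mul_of_nonneg_left h3 hN0le
        rw [← mul_assoc] at this
        field_simp at this
        calc ∑ i, |x i| = (n:ℝ) * ((1/(n:ℝ)) * ∑ i, |x i|) := by field_simp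
          _ ≤ (n:ℝ) * (n:ℝ) ^ (-(1:ℝ)/α) := mul_le_mul_of_nonneg_left h3 hN0le
      calc ∑ i, |x i| ≤ (n:ℝ) * (n:ℝ) ^ (-(1:ℝ)/α) := h5
        _ = NN := by
            rw [hNNdef]
            nth_rewrite 1 [← Real.rpow_one (n:ℝ)]
            rw [← Real.rpow_add hNpos]
            congr 1
            ring
    -- bound the polynomial by the symmetric function of the part sums
    have habs : ∑ e ∈ (TuranHG m q n).edges, ∏ i ∈ e, x i
        ≤ ∑ e ∈ (TuranHG m q n).edges, ∏ i ∈ e, |x i| := by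
      apply Finset.sum_le_sum
      intro e _
      calc ∏ i ∈ e, x i ≤ |∏ i ∈ e, x i| := le_abs_self _
        _ = ∏ i ∈ e, |x i| := Finset.abs_prod e x
    have hmac := maclaurin (β := Fin m) (fun j => ∑ i ∈ Finset.univ.filter
      (fun i => r i = j), |x i|) (fun j => Finset.sum_nonneg fun i _ => abs_nonneg _) q
    rw [Fintype.card_fin] at hmac
    have hfib : ∑ j : Fin m, ∑ i ∈ Finset.univ.filter (fun i => r i = j), |x i|
        = ∑ i, |x i| :=
      Finset.sum_fiberwise_of_maps_to (fun x _ => Finset.mem_univ (r x)) _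
    rw [hfib] at hmac
    have hpowle : (∑ i, |x i|) ^ q ≤ NN ^ q :=
      pow_le_pow_left₀ (Finset.sum_nonneg fun i _ => abs_nonneg _) hS1 q
    have hEsym_nonneg : (0:ℝ) ≤ ∑ J ∈ Finset.powersetCard q (Finset.univ : Finset (Fin m)),
        ∏ j ∈ J, ∑ i ∈ Finset.univ.filter (fun i => r i = j), |x i| :=
      Finset.sum_nonneg fun J _ => Finset.prod_nonneg fun j _ =>
        Finset.sum_nonneg fun i _ => abs_nonneg _
    have hmq : (0:ℝ) < (m:ℝ)^q := by positivity
    have hsym_le : ∑ J ∈ Finset.powersetCard q (Finset.univ : Finset (Fin m)),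
        ∏ j ∈ J, ∑ i ∈ Finset.univ.filter (fun i => r i = j), |x i|
        ≤ (m.choose q : ℝ) * NN ^ q / (m:ℝ)^q := by
      rw [le_div_iff₀ hmq]
      calc (∑ J ∈ Finset.powersetCard q (Finset.univ : Finset (Fin m)),
          ∏ j ∈ J, ∑ i ∈ Finset.univ.filter (fun i => r i = j), |x i|) * (m:ℝ)^q
          = (m:ℝ)^q * ∑ J ∈ Finset.powersetCard q (Finset.univ : Finset (Fin m)),
            ∏ j ∈ J, ∑ i ∈ Finset.univ.filter (fun i => r i = j), |x i| := by ring
        _ ≤ (m.choose q : ℝ) * (∑ i, |x i|) ^ q := hmac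
        _ ≤ (m.choose q : ℝ) * NN ^ q := by
            apply mul_le_mul_of_nonneg_left hpowle (Nat.cast_nonneg _)
    rw [lagPolyEdge, hBdef]
    apply mul_le_mul_of_nonneg_left _ (Nat.cast_nonneg _)
    calc ∑ e ∈ (TuranHG m q n).edges, ∏ i ∈ e, x i
        ≤ ∑ e ∈ (TuranHG m q n).edges, ∏ i ∈ e, |x i| := habs
      _ = ∑ J ∈ Finset.powersetCard q (Finset.univ : Finset (Fin m)),
          ∏ j ∈ J, ∑ i ∈ Finset.univ.filter (fun i => r i = j), |x i| :=
          hexpand (fun i => |x i|)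
      _ ≤ (m.choose q : ℝ) * NN ^ q / (m:ℝ)^q := hsym_le
  have hbdd : BddAbove (lagPolyEdge (TuranHG m q n) '' simplex α n) := by
    refine ⟨B, ?_⟩
    rintro y ⟨x, hx, rfl⟩
    exact hx_bound x hx
  -- lower bound
  have hlower : (q.factorial : ℝ) * ((TuranHG m q n).edges.card : ℝ) * (n:ℝ) ^ (-(q:ℝ)/α)
      ≤ specRadEdge α (TuranHG m q n) := by
    rw [← hval_u]
    exact le_csSup hbdd ⟨_, hu_mem, rfl⟩
  refine ⟨hlower, ?_⟩
  -- upper bound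
  have hBnonneg : 0 ≤ B := by
    rw [hBdef]
    positivity
  have hspec_le_B : specRadEdge α (TuranHG m q n) ≤ B := by
    apply Real.sSup_le _ hBnonneg
    rintro y ⟨x, hx, rfl⟩
    exact hx_bound x hx
  -- now B ≤ RHS
  by_cases hnq : n < q
  · -- no edges
    have hE0 : (TuranHG m q n).edges = ∅ := by
      rw [Finset.eq_empty_iff_forall_notMem]
      intro e he
      have h1 := (TuranHG m q n).card_eq e he
      have h2 : e.card ≤ n := by
        calc e.card ≤ (Finset.univ : Finset (Fin n)).card :=
              Finset.card_le_card (Finset.subset_univ e)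
          _ = n := by rw [Finset.card_univ, Fintype.card_fin]
      omega
    have hspec0 : specRadEdge α (TuranHG m q n) ≤ 0 := by
      apply Real.sSup_le _ le_rfl
      rintro y ⟨x, hx, rfl⟩
      rw [lagPolyEdge, hE0]
      simp
    rw [hE0]
    simp only [Finset.card_empty, Nat.cast_zero, mul_zero, zero_mul]
    linarith
  push_neg at hnq
  -- n ≥ q : the main estimate
  have hNq : (0:ℝ) < (n:ℝ) ^ (-(q:ℝ)/α) := Real.rpow_pos_of_pos hNpos _
  set a : ℝ := (n:ℝ)/m with hadef
  have ha_nonneg : 0 ≤ a := by positivity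
  -- Ecnt ≥ 1
  have hEcnt1 : (1:ℝ) ≤ Ecnt := by
    set J₀ : Finset (Fin m) := Finset.univ.filter (fun j : Fin m => (j:ℕ) < q) with hJ₀def
    have hJ₀card : #J₀ = q := by
      rw [hJ₀def, filter_univ_fin_card (fun k => k < q)]
      have : (Finset.range m).filter (fun k => k < q) = Finset.range q := by
        ext k
        simp only [Finset.mem_filter, Finset.mem_range]
        omega
      rw [this, Finset.card_range]
    have hJ₀mem : J₀ ∈ Finset.powersetCard q (Finset.univ : Finset (Fin m)) :=
      Finset.mem_powersetCard_univ.mpr hJ₀card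
    have hone : ∀ j ∈ J₀, (1:ℝ) ≤ cR j := by
      intro j hj
      rw [hJ₀def, Finset.mem_filter] at hj
      have hjn : (j:ℕ) < n := lt_of_lt_of_le hj.2 hnq
      have : (⟨(j:ℕ), hjn⟩ : Fin n) ∈ Finset.univ.filter (fun i => r i = j) := by
        rw [Finset.mem_filter]
        refine ⟨Finset.mem_univ _, ?_⟩
        apply Fin.ext
        rw [hrval]
        exact Nat.mod_eq_of_lt j.2
      have hpos : 0 < #(Finset.univ.filter (fun i => r i = j)) :=
        Finset.card_pos.mpr ⟨_, this⟩
      exact Nat.one_le_cast.mpr hpos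
    have hprod : (1:ℝ) ≤ ∏ j ∈ J₀, cR j := by
      calc (1:ℝ) = ∏ _j ∈ J₀, (1:ℝ) := by rw [Finset.prod_const, one_pow]
        _ ≤ ∏ j ∈ J₀, cR j := Finset.prod_le_prod (fun j _ => zero_le_one) hone
    calc (1:ℝ) ≤ ∏ j ∈ J₀, cR j := hprod
      _ ≤ Ecnt := Finset.single_le_sum
          (f := fun J => ∏ j ∈ J, cR j)
          (fun J _ => Finset.prod_nonneg fun j _ => hcR_nonneg j) hJ₀mem
  have hsum0 : ∑ j : Fin m, (cR j - a) = 0 := by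
    rw [Finset.sum_sub_distrib, hsum_cR, Finset.sum_const, Finset.card_univ,
      Fintype.card_fin, nsmul_eq_mul, hadef]
    field_simp
    ring
  -- key numeric inequality
  have hF : (m.choose q : ℝ) * a ^ q ≤ (1 + C/(n:ℝ)^2) * Ecnt := by
    have hN2 : (0:ℝ) < (n:ℝ)^2 := by positivity
    by_cases h2m : 2 * m ≤ n
    · -- large n
      have ha2 : (2:ℝ) ≤ a := by
        rw [hadef, le_div_iff₀ hmR]
        have : ((2*m : ℕ) : ℝ) ≤ (n:ℝ) := by exact_mod_cast h2m
        push_cast at this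
        linarith
      have ha1 : (1:ℝ) ≤ a := by linarith
      have hdef := esym_deficit (β := Fin m) cR a ha1 hcR_abs hsum0 hq
      rw [Fintype.card_fin] at hdef
      -- lower bound on Ecnt
      have hlowE : (m.choose q : ℝ) * (a/2) ^ q ≤ Ecnt := by
        have hperJ : ∀ J ∈ Finset.powersetCard q (Finset.univ : Finset (Fin m)),
            (a/2)^q ≤ ∏ j ∈ J, cR j := by
          intro J hJ
          rw [Finset.mem_powersetCard_univ] at hJ
          calc (a/2)^q = ∏ _j ∈ J, (a/2) := by rw [Finset.prod_const, hJ]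
            _ ≤ ∏ j ∈ J, cR j := by
                apply Finset.prod_le_prod (fun j _ => by linarith)
                intro j _
                have := abs_le.mp (hcR_abs j)
                linarith [this.1]
        calc (m.choose q : ℝ) * (a/2)^q
            = ∑ _J ∈ Finset.powersetCard q (Finset.univ : Finset (Fin m)), (a/2)^q := by
              rw [Finset.sum_const, Finset.card_powersetCard, Finset.card_univ,
                Fintype.card_fin, nsmul_eq_mul]
          _ ≤ Ecnt := Finset.sum_le_sum hperJ
      -- the error term
      have hapos : (0:ℝ) < a := by linarith
      have htpos : (0:ℝ) < a^(q-2) := pow_pos hapos _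
      have haq : a^q = a^(q-2) * a^2 := by
        rw [← pow_add]
        congr 1
        omega
      have ha2N : a^2 = (n:ℝ)^2/(m:ℝ)^2 := by
        rw [hadef, div_pow]
      have hKpos : (0:ℝ) < (m.choose q : ℝ) := by
        exact_mod_cast Nat.choose_pos hm
      have herr : (m.choose q : ℝ) * 2^q * a^(q-2) ≤ (C/(n:ℝ)^2) * Ecnt := by
        have h6 : (C/(n:ℝ)^2) * Ecnt ≥ (C/(n:ℝ)^2) * ((m.choose q : ℝ) * (a/2)^q) := by
          apply mul_le_mul_of_nonneg_left hlowE
          positivity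
        have h7 : (C/(n:ℝ)^2) * ((m.choose q : ℝ) * (a/2)^q)
            = C * (m.choose q : ℝ) * a^(q-2) / ((m:ℝ)^2 * 2^q) := by
          rw [div_pow, haq, ha2N]
          field_simp
        have h8 : (m.choose q : ℝ) * 2^q * a^(q-2)
            ≤ C * (m.choose q : ℝ) * a^(q-2) / ((m:ℝ)^2 * 2^q) := by
          rw [le_div_iff₀ (by positivity)]
          have hC4 : (4:ℝ)^q * (m:ℝ)^2 ≤ C := by
            rw [hCdef]
            nlinarith [hKpos, (by positivity : (0:ℝ) < (4:ℝ)^q * (m:ℝ)^2)]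
          have h4q : (4:ℝ)^q = 2^q * 2^q := by
            rw [← mul_pow]; norm_num
          calc (m.choose q : ℝ) * 2^q * a^(q-2) * ((m:ℝ)^2 * 2^q)
              = ((4:ℝ)^q * (m:ℝ)^2) * ((m.choose q : ℝ) * a^(q-2)) := by
                rw [h4q]; ring
            _ ≤ C * ((m.choose q : ℝ) * a^(q-2)) := by
                apply mul_le_mul_of_nonneg_right hC4
                positivity
            _ = C * (m.choose q : ℝ) * a^(q-2) := by ring
        calc (m.choose q : ℝ) * 2^q * a^(q-2)
            ≤ C * (m.choose q : ℝ) * a^(q-2) / ((m:ℝ)^2 * 2^q) := h8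
          _ = (C/(n:ℝ)^2) * ((m.choose q : ℝ) * (a/2)^q) := h7.symm
          _ ≤ (C/(n:ℝ)^2) * Ecnt := h6
      calc (m.choose q : ℝ) * a^q
          ≤ Ecnt + (m.choose q : ℝ) * 2^q * a^(q-2) := hdef
        _ ≤ Ecnt + (C/(n:ℝ)^2) * Ecnt := by linarith
        _ = (1 + C/(n:ℝ)^2) * Ecnt := by ring
    · -- small n
      push_neg at h2m
      have halt : a < 2 := by
        rw [hadef, div_lt_iff₀ hmR]
        have : (n:ℝ) < ((2*m : ℕ) : ℝ) := by exact_mod_cast h2m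
        push_cast at this
        linarith
      have hNlt : (n:ℝ) ≤ 2*(m:ℝ) := by
        have : (n:ℝ) < ((2*m : ℕ) : ℝ) := by exact_mod_cast h2m
        push_cast at this
        linarith
      have hsmall : (m.choose q : ℝ) * a^q ≤ C/(n:ℝ)^2 := by
        rw [le_div_iff₀ hN2]
        have h1 : a^q ≤ 2^q := by
          apply pow_le_pow_left₀ ha_nonneg (by linarith) q
        have h2 : (n:ℝ)^2 ≤ 4*(m:ℝ)^2 := by nlinarith
        have h3 : (2:ℝ)^q * 4 ≤ (4:ℝ)^q := by
          have h4q : (4:ℝ)^q = 2^q * 2^q := by rw [← mul_pow]; norm_num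
          have : (4:ℝ) ≤ 2^q := by
            calc (4:ℝ) = 2^2 := by norm_num
              _ ≤ 2^q := pow_le_pow_right₀ (by norm_num) hq
          nlinarith [(by positivity : (0:ℝ) < (2:ℝ)^q)]
        have hch : (0:ℝ) ≤ (m.choose q : ℝ) := Nat.cast_nonneg _
        calc (m.choose q : ℝ) * a^q * (n:ℝ)^2
            ≤ (m.choose q : ℝ) * 2^q * (4*(m:ℝ)^2) := by
              apply mul_le_mul _ h2 (by positivity) (by positivity)
              apply mul_le_mul_of_nonneg_left h1 hch
          _ = ((2:ℝ)^q * 4) * ((m.choose q : ℝ) * (m:ℝ)^2) := by ring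
          _ ≤ (4:ℝ)^q * ((m.choose q : ℝ) * (m:ℝ)^2) := by
              apply mul_le_mul_of_nonneg_right h3 (by positivity)
          _ ≤ C := by
              rw [hCdef]
              nlinarith [(by positivity : (0:ℝ) < (4:ℝ)^q * (m:ℝ)^2)]
      calc (m.choose q : ℝ) * a^q ≤ C/(n:ℝ)^2 := hsmall
        _ = (C/(n:ℝ)^2) * 1 := by ring
        _ ≤ (C/(n:ℝ)^2) * Ecnt := by
            apply mul_le_mul_of_nonneg_left hEcnt1
            positivity
        _ ≤ (1 + C/(n:ℝ)^2) * Ecnt := by nlinarith [hEcnt_nonneg]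
  -- convert B
  have hNNq : NN^q = (n:ℝ)^q * (n:ℝ)^(-(q:ℝ)/α) := by
    rw [hNNdef, ← Real.rpow_natCast ((n:ℝ) ^ ((1:ℝ) - 1/α)) q, ← Real.rpow_mul hN0le]
    have hsplit : ((1:ℝ) - 1/α) * (q:ℕ) = (q:ℝ) + (-(q:ℝ)/α) := by
      push_cast
      field_simp
      ring
    rw [hsplit, Real.rpow_add hNpos, Real.rpow_natCast]
  have hBeq : B = (q.factorial : ℝ) * ((m.choose q : ℝ) * a^q) * (n:ℝ)^(-(q:ℝ)/α) := by
    rw [hBdef, hNNq, hadef, div_pow]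
    field_simp
  calc specRadEdge α (TuranHG m q n) ≤ B := hspec_le_B
    _ = (q.factorial : ℝ) * ((m.choose q : ℝ) * a^q) * (n:ℝ)^(-(q:ℝ)/α) := hBeq
    _ ≤ (q.factorial : ℝ) * ((1 + C/(n:ℝ)^2) * Ecnt) * (n:ℝ)^(-(q:ℝ)/α) := by
        apply mul_le_mul_of_nonneg_right _ (le_of_lt hNq)
        apply mul_le_mul_of_nonneg_left hF (Nat.cast_nonneg _)
    _ = (1 + C/(n:ℝ)^2) * ((q.factorial : ℝ) * ((TuranHG m q n).edges.card : ℝ)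
        * (n:ℝ)^(-(q:ℝ)/α)) := by
        rw [hcardE]
        ring
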